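/- Let A be a C*-algebra (not necessarily unital) and let x ∈ A be selfadjoint, with x = x₊ − x₋ its unique decomposition into positive parts x₊, x₋ ≥ 0 satisfying x₊·x₋ = 0 (given by continuous functional calculus). Then the distance from x to the positive cone of A equals ‖x₋‖, and the distance from x to the negative of the positive cone equals ‖x₊‖; that is, Metric.infDist x {a ∈ A | 0 ≤ a} = ‖x₋‖ and Metric.infDist x {a ∈ A | 0 ≤ -a} = ‖x₊‖. -/

import Mathlib

open scoped ComplexOrder

lemma aux_norm_cube {A : Type*} [NonUnitalCStarAlgebra A] [PartialOrder A] [StarOrderedRing A]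
    {c : A} (hc : 0 ≤ c) : ‖c‖ ^ 3 ≤ ‖c * c * c‖ := by
  have hsa : IsSelfAdjoint c := .of_nonneg hc
  have hsq : ‖c * c‖ = ‖c‖ * ‖c‖ := by
    rw [show c * c = star c * c by rw [hsa.star_eq], CStarRing.norm_star_mul_self]
  have hsq2 : IsSelfAdjoint (c * c) := by
    simpa [hsa.star_eq] using IsSelfAdjoint.star_mul_self c
  have h4 : ‖(c * c) * (c * c)‖ = ‖c‖ ^ 4 := by
    rw [show (c * c) * (c * c) = star (c * c) * (c * c) by rw [hsq2.star_eq],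
      CStarRing.norm_star_mul_self, hsq]
    ring
  have hle : ‖(c * c) * (c * c)‖ ≤ ‖c‖ * ‖c * c * c‖ := by
    calc ‖(c * c) * (c * c)‖ = ‖c * (c * c * c)‖ := by rw [mul_assoc, mul_assoc]
    _ ≤ ‖c‖ * ‖c * c * c‖ := norm_mul_le _ _
  rcases eq_or_lt_of_le (norm_nonneg c) with h0 | h0
  · simp [← h0]
  · have h5 : ‖c‖ * ‖c‖ ^ 3 ≤ ‖c‖ * ‖c * c * c‖ := by
      calc ‖c‖ * ‖c‖ ^ 3 = ‖c‖ ^ 4 := by ring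
      _ = ‖(c * c) * (c * c)‖ := h4.symm
      _ ≤ ‖c‖ * ‖c * c * c‖ := hle
    exact le_of_mul_le_mul_left h5 h0

/-- Distance from a selfadjoint element to the positive cone is the norm of its
negative part. -/
lemma aux_infDist_negPart {A : Type*} [NonUnitalCStarAlgebra A] [PartialOrder A]
    [StarOrderedRing A] (x : A) (hx : IsSelfAdjoint x) :
    Metric.infDist x {a : A | 0 ≤ a} = ‖x⁻‖ := by
  have hxm : (0 : A) ≤ x⁻ := CFC.negPart_nonneg x
  have hxmsa : IsSelfAdjoint (x⁻) := .of_nonneg hxm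
  have hne : ({a : A | 0 ≤ a}).Nonempty := ⟨0, le_refl 0⟩
  have h : x⁺ - x⁻ = x := CFC.posPart_sub_negPart x hx
  apply le_antisymm
  · -- upper bound: x⁺ is in the cone, dist x x⁺ = ‖x⁻‖
    have hmem : x⁺ ∈ {a : A | 0 ≤ a} := CFC.posPart_nonneg x
    have h2 : x⁺ = x + x⁻ := sub_eq_iff_eq_add.mp h
    have h3 : x - x⁺ = -(x⁻) := by rw [h2]; abel
    calc Metric.infDist x {a : A | 0 ≤ a} ≤ dist x x⁺ := Metric.infDist_le_dist_of_mem hmem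
    _ = ‖x⁻‖ := by rw [dist_eq_norm, h3, norm_neg]
  · -- lower bound: for every b ≥ 0, ‖x⁻‖ ≤ ‖x - b‖
    rw [Metric.infDist_eq_iInf]
    have : Nonempty ({a : A | 0 ≤ a}) := hne.to_subtype
    refine le_ciInf fun ⟨b, hb⟩ => ?_
    simp only [dist_eq_norm]
    -- key computation: x⁻ * x * x⁻ = -(x⁻ * x⁻ * x⁻)
    have hmulx : x⁻ * x * x⁻ = -(x⁻ * x⁻ * x⁻) := by
      have := congrArg (fun y => x⁻ * y * x⁻) h
      simp only [mul_sub, sub_mul, CFC.negPart_mul_posPart, zero_mul] at this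
      rw [← this]
      abel
    -- key: x⁻ * (b - x) * x⁻ = x⁻ * b * x⁻ + x⁻ * x⁻ * x⁻ ≥ x⁻ * x⁻ * x⁻
    have hkey : x⁻ * x⁻ * x⁻ ≤ x⁻ * (b - x) * x⁻ := by
      have h1 : x⁻ * (b - x) * x⁻ = x⁻ * b * x⁻ + x⁻ * x⁻ * x⁻ := by
        rw [mul_sub, sub_mul, hmulx]
        abel
      have h2 : (0 : A) ≤ x⁻ * b * x⁻ := by
        have := star_left_conjugate_nonneg hb (x⁻)
        rwa [hxmsa.star_eq] at this
      calc x⁻ * x⁻ * x⁻ = 0 + x⁻ * x⁻ * x⁻ := by rw [zero_add]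
      _ ≤ x⁻ * b * x⁻ + x⁻ * x⁻ * x⁻ := add_le_add_left h2 _
      _ = x⁻ * (b - x) * x⁻ := h1.symm
    have hcube3 : (0 : A) ≤ x⁻ * x⁻ * x⁻ := by
      have := star_left_conjugate_nonneg hxm (x⁻)
      rwa [hxmsa.star_eq] at this
    have hcube : ‖x⁻ * x⁻ * x⁻‖ ≤ ‖x⁻‖ ^ 2 * ‖x - b‖ := by
      calc ‖x⁻ * x⁻ * x⁻‖ ≤ ‖x⁻ * (b - x) * x⁻‖ :=
            CStarAlgebra.norm_le_norm_of_nonneg_of_le hcube3 hkey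
      _ ≤ ‖x⁻ * (b - x)‖ * ‖x⁻‖ := norm_mul_le _ _
      _ ≤ ‖x⁻‖ * ‖b - x‖ * ‖x⁻‖ := by
          gcongr
          exact norm_mul_le _ _
      _ = ‖x⁻‖ ^ 2 * ‖b - x‖ := by ring
      _ = ‖x⁻‖ ^ 2 * ‖x - b‖ := by rw [norm_sub_rev]
    have h3 : ‖x⁻‖ ^ 3 ≤ ‖x⁻‖ ^ 2 * ‖x - b‖ := (aux_norm_cube hxm).trans hcube
    rcases eq_or_lt_of_le (norm_nonneg (x⁻)) with h0 | h0
    · rw [← h0]; exact norm_nonneg _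
    · have hsq : (0 : ℝ) < ‖x⁻‖ ^ 2 := by positivity
      refine le_of_mul_le_mul_left ?_ hsq
      calc ‖x⁻‖ ^ 2 * ‖x⁻‖ = ‖x⁻‖ ^ 3 := by ring
      _ ≤ ‖x⁻‖ ^ 2 * ‖x - b‖ := h3

/-- In a (not necessarily unital) C*-algebra `A`, if `x` is selfadjoint
with positive/negative parts `xp`, `xm` (i.e. `0 ≤ xp`, `0 ≤ xm`, `x = xp - xm`,
`xp * xm = 0`), then the distance of `x` to the positive cone is `‖xm‖` and the distance
of `x` to the negative of the positive cone is `‖xp‖`. -/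
theorem stmt_0 {A : Type*} [NonUnitalCStarAlgebra A] [PartialOrder A] [StarOrderedRing A]
    (x xp xm : A) (hx : IsSelfAdjoint x)
    (hxp : 0 ≤ xp) (hxm : 0 ≤ xm) (hsub : x = xp - xm) (horth : xp * xm = 0) :
    Metric.infDist x {a : A | 0 ≤ a} = ‖xm‖ ∧
      Metric.infDist x {a : A | 0 ≤ -a} = ‖xp‖ := by
  obtain ⟨hpos, hneg⟩ := CFC.posPart_negPart_unique hsub horth hxp hxm
  constructor
  · rw [aux_infDist_negPart x hx, hneg]
  · -- rewrite as infDist of -x to the positive cone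
    have hset : {a : A | 0 ≤ -a} = (fun a => -a) '' {a : A | 0 ≤ a} := by
      ext a
      constructor
      · intro ha; exact ⟨-a, ha, by simp⟩
      · rintro ⟨b, hb, rfl⟩; simpa using hb
    have hdist : Metric.infDist x {a : A | 0 ≤ -a} =
        Metric.infDist (-x) {a : A | 0 ≤ a} := by
      calc Metric.infDist x {a : A | 0 ≤ -a}
          = Metric.infDist (-(-x)) ((fun a : A => -a) '' {a : A | 0 ≤ a}) := by
            rw [hset, neg_neg]
        _ = Metric.infDist (-x) {a : A | 0 ≤ a} :=
            Metric.infDist_image (isometry_neg : Isometry (fun a : A => -a))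
    rw [hdist, aux_infDist_negPart (-x) hx.neg, CFC.negPart_neg, hpos]
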